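/- Let A be an n×n pattern matrix all of whose diagonal entries are ?, and let B be an n×m pattern matrix. Then the structured system (A,B) is strongly structurally controllable if and only if the n×(n+m) pattern matrix [A B] has full row rank. -/

import Mathlib

/-- The symbols of a pattern matrix: fixed zero (`0`), arbitrary nonzero (`∗`),
and arbitrary (`?`). -/
inductive PSym : Type
  | zero
  | star
  | arb
  deriving DecidableEq

open Matrix

/-- The pattern class of a pattern matrix: real matrices that are `0` where the pattern
is `0`, nonzero where the pattern is `∗`, and unrestricted where the pattern is `?`. -/
def PatternClass {R C : Type*} (M : Matrix R C PSym) : Set (Matrix R C ℝ) :=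
  {A | ∀ i j, (M i j = PSym.zero → A i j = 0) ∧ (M i j = PSym.star → A i j ≠ 0)}

/-- A pattern matrix has full row rank if every member of its pattern class
has full row rank. -/
def PatternFullRowRank {R C : Type*} [Fintype R] [Fintype C] (M : Matrix R C PSym) : Prop :=
  ∀ A ∈ PatternClass M, A.rank = Fintype.card R

/-- Hautus test: `(A, B)` is controllable iff `[A - λI, B]` has rank `n` for all `λ ∈ ℂ`. -/
def Controllable {n m : ℕ} (A : Matrix (Fin n) (Fin n) ℝ) (B : Matrix (Fin n) (Fin m) ℝ) : Prop :=
  ∀ l : ℂ, (Matrix.fromCols (A.map (Complex.ofReal) - l • (1 : Matrix (Fin n) (Fin n) ℂ))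
      (B.map (Complex.ofReal))).rank = n

/-- Hautus test for stabilizability: `[A - λI, B]` has rank `n` for all `λ` with `Re λ ≥ 0`. -/
def Stabilizable {n m : ℕ} (A : Matrix (Fin n) (Fin n) ℝ) (B : Matrix (Fin n) (Fin m) ℝ) : Prop :=
  ∀ l : ℂ, 0 ≤ l.re →
    (Matrix.fromCols (A.map (Complex.ofReal) - l • (1 : Matrix (Fin n) (Fin n) ℂ))
      (B.map (Complex.ofReal))).rank = n

/-- Strong structural controllability of the structured system `(𝒜, ℬ)`. -/
def StrStrControllable {n m : ℕ} (𝒜 : Matrix (Fin n) (Fin n) PSym)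
    (ℬ : Matrix (Fin n) (Fin m) PSym) : Prop :=
  ∀ A ∈ PatternClass 𝒜, ∀ B ∈ PatternClass ℬ, Controllable A B

/-- Strong structural stabilizability of the structured system `(𝒜, ℬ)`. -/
def StrStrStabilizable {n m : ℕ} (𝒜 : Matrix (Fin n) (Fin n) PSym)
    (ℬ : Matrix (Fin n) (Fin m) PSym) : Prop :=
  ∀ A ∈ PatternClass 𝒜, ∀ B ∈ PatternClass ℬ, Stabilizable A B

/-- The pattern matrix `Ā` obtained from `𝒜` by replacing each diagonal entry by `∗`
if it is `0` and by `?` otherwise, keeping all off-diagonal entries. -/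
def barPattern {n : ℕ} (𝒜 : Matrix (Fin n) (Fin n) PSym) : Matrix (Fin n) (Fin n) PSym :=
  fun i j => if i = j then (if 𝒜 i i = PSym.zero then PSym.star else PSym.arb) else 𝒜 i j

/-- The sets of black nodes obtainable in `G(M)` by repeatedly applying the color change
rule, starting from the all-white coloring. The colorable nodes are the rows of `M`;
every node of `G(M)` corresponds to a column `c`, whose out-neighbors are the rows `k`
with `M k c ≠ 0`, and the edge from `c` to `k` is in `E_∗` iff `M k c = ∗`. A step colors
`j` black when some node `c` has `j` as its only white out-neighbor and `(c, j) ∈ E_∗`. -/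
inductive ColorStep {R C : Type*} (M : Matrix R C PSym) : Set R → Prop
  | init : ColorStep M ∅
  | step (S : Set R) (c : C) (j : R)
      (hS : ColorStep M S)
      (hstar : M j c = PSym.star)
      (hwhite : j ∉ S)
      (huniq : ∀ k : R, M k c ≠ PSym.zero → k ∉ S → k = j) :
      ColorStep M (insert j S)

/-- `G(M)` is colorable if all row-nodes can be colored black by repeated application
of the color change rule. -/
def PatternColorable {R C : Type*} (M : Matrix R C PSym) : Prop :=
  ColorStep M Set.univ

lemma rank_eq_card_iff_vecMul {K : Type*} [Field K] {n : ℕ} {C : Type*} [Fintype C]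
    (M : Matrix (Fin n) C K) :
    M.rank = n ↔ ∀ x : Fin n → K, x ᵥ* M = 0 → x = 0 := by
  rw [← Matrix.rank_transpose]
  have hrn := LinearMap.finrank_range_add_finrank_ker (Mᵀ.mulVecLin)
  have hdom : Module.finrank K (Fin n → K) = n := by simp
  rw [hdom] at hrn
  unfold Matrix.rank
  constructor
  · intro h x hx
    have hker : Module.finrank K (LinearMap.ker Mᵀ.mulVecLin) = 0 := by omega
    have hbot : LinearMap.ker Mᵀ.mulVecLin = ⊥ := Submodule.finrank_eq_zero.mp hker
    have hxk : x ∈ LinearMap.ker Mᵀ.mulVecLin := by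
      simp [LinearMap.mem_ker, Matrix.mulVecLin_apply, Matrix.mulVec_transpose, hx]
    rw [hbot] at hxk
    simpa using hxk
  · intro h
    have hbot : LinearMap.ker Mᵀ.mulVecLin = ⊥ := by
      rw [LinearMap.ker_eq_bot']
      intro x hx
      exact h x (by rwa [Matrix.mulVecLin_apply, Matrix.mulVec_transpose] at hx)
    rw [hbot] at hrn
    simpa using hrn

lemma vecMul_map_ofReal {a b : Type*} [Fintype a] (P : Matrix a b ℝ) (x : a → ℝ) :
    (fun i => (x i : ℂ)) ᵥ* (P.map Complex.ofReal) = fun j => ((x ᵥ* P) j : ℂ) := by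
  funext j
  simp only [Matrix.vecMul, dotProduct, Matrix.map_apply]
  push_cast
  rfl

theorem ssc_iff_full_row_rank_of_diag_arb' {n m : ℕ} (𝒜 : Matrix (Fin n) (Fin n) PSym)
    (ℬ : Matrix (Fin n) (Fin m) PSym) (hdiag : ∀ i, 𝒜 i i = PSym.arb) :
    StrStrControllable 𝒜 ℬ ↔ PatternFullRowRank (Matrix.fromCols 𝒜 ℬ) := by
  constructor
  · -- forward
    intro hssc M hM
    set A : Matrix (Fin n) (Fin n) ℝ := fun i j => M i (Sum.inl j) with hAdef
    set B : Matrix (Fin n) (Fin m) ℝ := fun i j => M i (Sum.inr j) with hBdef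
    have hMeq : Matrix.fromCols A B = M := by
      ext i j; cases j <;> rfl
    have hA : A ∈ PatternClass 𝒜 := fun i j => hM i (Sum.inl j)
    have hB : B ∈ PatternClass ℬ := fun i j => hM i (Sum.inr j)
    have hc := hssc A hA B hB 0
    rw [zero_smul, sub_zero] at hc
    have hC := (rank_eq_card_iff_vecMul _).mp hc
    rw [Fintype.card_fin]
    rw [rank_eq_card_iff_vecMul]
    intro x hx
    have hxc : (fun i => (x i : ℂ)) ᵥ* (Matrix.fromCols (A.map (Complex.ofReal))
        (B.map (Complex.ofReal))) = 0 := by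
      have : Matrix.fromCols (A.map (Complex.ofReal)) (B.map (Complex.ofReal))
          = (Matrix.fromCols A B).map Complex.ofReal := by
        ext i j; cases j <;> rfl
      rw [this, vecMul_map_ofReal, hMeq, hx]
      funext j; simp
    have := hC _ hxc
    funext i
    have h0 := congrFun this i
    simpa using h0
  · -- backward
    intro hfrr A hA B hB l
    rw [rank_eq_card_iff_vecMul]
    intro x hx
    rw [Matrix.vecMul_fromCols] at hx
    have h2 : x ᵥ* (B.map Complex.ofReal) = 0 := funext fun j => congrFun hx (Sum.inr j)
    have hAx : ∀ j, ∑ i, x i * (A i j : ℂ) = l * x j := by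
      intro j
      have h : (x ᵥ* (A.map Complex.ofReal - l • 1)) j = 0 := congrFun hx (Sum.inl j)
      simp only [Matrix.vecMul, dotProduct, Matrix.sub_apply, Matrix.map_apply,
        Matrix.smul_apply, Matrix.one_apply, smul_eq_mul, mul_ite, mul_one, mul_zero,
        mul_sub, Finset.sum_sub_distrib, Finset.sum_ite_eq', Finset.mem_univ, if_true,
        sub_eq_zero] at h
      simpa [mul_comm] using h
    set u : Fin n → ℝ := fun i => (x i).re with hu
    set v : Fin n → ℝ := fun i => (x i).im with hv
    set α : ℝ := l.re
    set β : ℝ := l.im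
    have hre : ∀ j, ∑ i, u i * A i j = α * u j - β * v j := by
      intro j
      have := congrArg Complex.re (hAx j)
      rw [Complex.re_sum] at this
      simpa [Complex.mul_re] using this
    have him : ∀ j, ∑ i, v i * A i j = α * v j + β * u j := by
      intro j
      have := congrArg Complex.im (hAx j)
      rw [Complex.im_sum] at this
      simpa [Complex.mul_im] using this
    have hBu : ∀ j, ∑ i, u i * B i j = 0 := by
      intro j
      have := congrArg Complex.re (congrFun h2 j)
      rw [show ((x ᵥ* B.map Complex.ofReal) j) = ∑ i, x i * (B i j : ℂ) from by
        simp [Matrix.vecMul, dotProduct, Matrix.map_apply], Complex.re_sum] at this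
      simpa [Complex.mul_re] using this
    have hBv : ∀ j, ∑ i, v i * B i j = 0 := by
      intro j
      have := congrArg Complex.im (congrFun h2 j)
      rw [show ((x ᵥ* B.map Complex.ofReal) j) = ∑ i, x i * (B i j : ℂ) from by
        simp [Matrix.vecMul, dotProduct, Matrix.map_apply], Complex.im_sum] at this
      simpa [Complex.mul_im] using this
    -- choose t avoiding finitely many bad values
    obtain ⟨t, ht⟩ := Infinite.exists_notMem_finset
      (Finset.image (fun j => -u j / v j) (Finset.univ : Finset (Fin n)))
    have htgood : ∀ j, v j ≠ 0 → u j + t * v j ≠ 0 := by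
      intro j hvj habs
      apply ht
      refine Finset.mem_image.mpr ⟨j, Finset.mem_univ j, ?_⟩
      field_simp
      linarith [habs]
    set w : Fin n → ℝ := fun i => u i + t * v i with hwdef
    set w' : Fin n → ℝ := fun i => t * u i - v i with hw'def
    have hwA : ∀ j, ∑ i, w i * A i j = α * w j + β * w' j := by
      intro j
      have hsum : ∑ i, w i * A i j = (∑ i, u i * A i j) + t * ∑ i, v i * A i j := by
        rw [Finset.mul_sum, ← Finset.sum_add_distrib]
        exact Finset.sum_congr rfl fun i _ => by simp [hwdef]; ring
      rw [hsum, hre j, him j, hwdef, hw'def]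
      ring
    have hwB : ∀ j, ∑ i, w i * B i j = 0 := by
      intro j
      have hsum : ∑ i, w i * B i j = (∑ i, u i * B i j) + t * ∑ i, v i * B i j := by
        rw [Finset.mul_sum, ← Finset.sum_add_distrib]
        exact Finset.sum_congr rfl fun i _ => by simp [hwdef]; ring
      rw [hsum, hBu j, hBv j]; ring
    have hlink : ∀ j, w j = 0 → w' j = 0 := by
      intro j hwj
      by_cases hvj : v j = 0
      · have huj : u j = 0 := by
          have := hwj; rw [hwdef] at this; simp only at this
          simpa [hvj] using this
        simp [hw'def, huj, hvj]
      · exact absurd hwj (htgood j hvj)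
    -- build the perturbed real matrix
    set d : Fin n → ℝ := fun j => if w j = 0 then 0 else -(β * w' j) / w j with hd
    set A' : Matrix (Fin n) (Fin n) ℝ := fun i j => A i j + if i = j then d i - α else 0
      with hA'
    have hM' : Matrix.fromCols A' B ∈ PatternClass (Matrix.fromCols 𝒜 ℬ) := by
      intro i j
      cases j with
      | inl j =>
        by_cases hij : i = j
        · subst hij
          constructor <;> intro h <;>
            · rw [show (Matrix.fromCols 𝒜 ℬ) i (Sum.inl i) = PSym.arb from hdiag i] at h
              cases h
        · have : (Matrix.fromCols A' B) i (Sum.inl j) = A i j := by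
            simp [Matrix.fromCols, hA', hij]
          rw [this]
          exact hA i j
      | inr j => exact hB i j
    have hrank := hfrr _ hM'
    rw [Fintype.card_fin, rank_eq_card_iff_vecMul] at hrank
    have hwnull : w ᵥ* Matrix.fromCols A' B = 0 := by
      funext j
      rw [Pi.zero_apply]
      cases j with
      | inl j =>
        have : (w ᵥ* Matrix.fromCols A' B) (Sum.inl j) = ∑ i, w i * A' i j := by
          simp [Matrix.vecMul, dotProduct, Matrix.fromCols]
        rw [this]
        have hsplit : ∑ i, w i * A' i j
            = (∑ i, w i * A i j) + ∑ i, (if i = j then w i * (d i - α) else 0) := by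
          rw [← Finset.sum_add_distrib]
          refine Finset.sum_congr rfl fun i _ => ?_
          rw [hA']
          by_cases hij : i = j <;> simp [hij] <;> ring
        rw [hsplit, Finset.sum_ite_eq' Finset.univ j (fun i => w i * (d i - α))]
        simp only [Finset.mem_univ, if_true]
        rw [hwA j]
        by_cases hwj : w j = 0
        · rw [hwj, hlink j hwj]
          ring
        · rw [hd]
          simp only [hwj, if_false]
          field_simp
          ring
      | inr j =>
        have : (w ᵥ* Matrix.fromCols A' B) (Sum.inr j) = ∑ i, w i * B i j := by
          simp [Matrix.vecMul, dotProduct, Matrix.fromCols]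
        rw [this, hwB j]
    have hw0 := hrank w hwnull
    funext j
    have hwj : w j = 0 := congrFun hw0 j
    have hvj : v j = 0 := by
      by_contra hvj
      exact htgood j hvj hwj
    have huj : u j = 0 := by
      have := hwj; rw [hwdef] at this; simpa [hvj] using this
    apply Complex.ext
    · simpa [hu] using huj
    · simpa [hv] using hvj

/-- If all diagonal entries of `𝒜` are `?`, then `(𝒜, ℬ)` is strongly structurally
controllable iff `[𝒜 ℬ]` has full row rank. -/
theorem ssc_iff_full_row_rank_of_diag_arb {n m : ℕ} (𝒜 : Matrix (Fin n) (Fin n) PSym)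
    (ℬ : Matrix (Fin n) (Fin m) PSym) (hdiag : ∀ i, 𝒜 i i = PSym.arb) :
    StrStrControllable 𝒜 ℬ ↔ PatternFullRowRank (Matrix.fromCols 𝒜 ℬ) := by
  exact ssc_iff_full_row_rank_of_diag_arb' 𝒜 ℬ hdiag
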